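/- Fix d ≥ 1 and points z₁,…,z_n ∈ ℝ^d, and let ℓ : ℝ^d → ℝ be continuous and bounded. For λ ≥ 0 define φ_λ(z) = sup_{z' ∈ ℝ^d} (ℓ(z') − λ‖z − z'‖²). Call a feasible perturbation a choice of finitely many points z'₁,…,z'_m ∈ ℝ^d together with a matrix Γ ∈ ℝ^{n×m} with Γ_{ij} ≥ 0 and ∑_{j=1}^m Γ_{ij} = 1/n for every i; its cost is ∑_{i,j} Γ_{ij}·‖z_i − z'_j‖² and its value is ∑_{i,j} Γ_{ij}·ℓ(z'_j). Then for every ε > 0, the supremum of the value over all feasible perturbations of cost at most ε equals the infimum over λ ≥ 0 of λ·ε + (1/n)·∑_{i=1}^n φ_λ(z_i). -/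

import Mathlib

open Finset

namespace WDRO

noncomputable section

variable {d n : ℕ}

abbrev E (d : ℕ) := EuclideanSpace ℝ (Fin d)

def pset (z : Fin n → E d) (ℓ : E d → ℝ) (t : ℝ) : Set ℝ :=
  {val | ∃ (m : ℕ) (z' : Fin m → E d) (Γ : Fin n → Fin m → ℝ),
    (∀ i j, 0 ≤ Γ i j) ∧ (∀ i, ∑ j, Γ i j = 1 / (n : ℝ)) ∧
    (∑ i, ∑ j, Γ i j * ‖z i - z' j‖ ^ 2 ≤ t) ∧
    val = ∑ i, ∑ j, Γ i j * ℓ (z' j)}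

def phi (ℓ : E d → ℝ) (lam : ℝ) (x : E d) : ℝ := ⨆ w : E d, (ℓ w - lam * ‖x - w‖ ^ 2)

variable {z : Fin n → E d} {ℓ : E d → ℝ} {M : ℝ}

lemma phi_bddAbove (hbdd : ∀ w, |ℓ w| ≤ M) {lam : ℝ} (hlam : 0 ≤ lam) (x : E d) :
    BddAbove (Set.range fun w : E d => ℓ w - lam * ‖x - w‖ ^ 2) := by
  refine ⟨M, ?_⟩
  rintro _ ⟨w, rfl⟩
  have h1 := (abs_le.1 (hbdd w)).2
  have h2 : 0 ≤ lam * ‖x - w‖ ^ 2 := by positivity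
  dsimp; linarith

lemma le_phi (hbdd : ∀ w, |ℓ w| ≤ M) {lam : ℝ} (hlam : 0 ≤ lam) (x w : E d) :
    ℓ w - lam * ‖x - w‖ ^ 2 ≤ phi ℓ lam x :=
  le_ciSup (phi_bddAbove hbdd hlam x) w

lemma self_le_phi (hbdd : ∀ w, |ℓ w| ≤ M) {lam : ℝ} (hlam : 0 ≤ lam) (x : E d) :
    ℓ x ≤ phi ℓ lam x := by
  have := le_phi hbdd hlam x x
  simpa using this

lemma diag_mem (hn : 0 < n) (w : Fin n → E d) {t : ℝ}
    (ht : (1 / (n : ℝ)) * ∑ i, ‖z i - w i‖ ^ 2 ≤ t) :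
    (1 / (n : ℝ)) * ∑ i, ℓ (w i) ∈ pset z ℓ t := by
  refine ⟨n, w, fun i j => if i = j then 1 / (n : ℝ) else 0, ?_, ?_, ?_, ?_⟩
  · intro i j; dsimp only; split_ifs <;> positivity
  · intro i; simp
  · simpa [ite_mul, Finset.mul_sum] using ht
  · simp [ite_mul, Finset.mul_sum]

lemma pset_nonempty (hn : 0 < n) {t : ℝ} (ht : 0 ≤ t) : (pset z ℓ t).Nonempty := by
  refine ⟨(1 / (n : ℝ)) * ∑ i, ℓ (z i), diag_mem hn z ?_⟩
  simpa using ht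

lemma val_le (hn : 0 < n) (hbdd : ∀ w, |ℓ w| ≤ M) {t val : ℝ} (hval : val ∈ pset z ℓ t) :
    val ≤ M := by
  obtain ⟨m, z', Γ, hΓ, hrow, hcost, rfl⟩ := hval
  calc ∑ i, ∑ j, Γ i j * ℓ (z' j) ≤ ∑ i, ∑ j, Γ i j * M := by
        refine Finset.sum_le_sum fun i _ => Finset.sum_le_sum fun j _ => ?_
        exact mul_le_mul_of_nonneg_left ((abs_le.1 (hbdd _)).2) (hΓ i j)
    _ = ∑ i : Fin n, (1 / (n : ℝ)) * M := by
        refine Finset.sum_congr rfl fun i _ => ?_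
        rw [← Finset.sum_mul, hrow i]
    _ = M := by
        rw [Finset.sum_const, Finset.card_univ, Fintype.card_fin, nsmul_eq_mul]
        have : (n : ℝ) ≠ 0 := Nat.cast_ne_zero.2 hn.ne'
        field_simp

lemma bddAbove_pset (hn : 0 < n) (hbdd : ∀ w, |ℓ w| ≤ M) {t : ℝ} :
    BddAbove (pset z ℓ t) :=
  ⟨M, fun _ hv => val_le hn hbdd hv⟩

lemma comb_mem {a b v₁ v₂ θ : ℝ} (hθ0 : 0 ≤ θ) (hθ1 : θ ≤ 1)
    (h₁ : v₁ ∈ pset z ℓ a) (h₂ : v₂ ∈ pset z ℓ b) :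
    θ * v₁ + (1 - θ) * v₂ ∈ pset z ℓ (θ * a + (1 - θ) * b) := by
  obtain ⟨m₁, z₁, Γ₁, hΓ₁, hrow₁, hcost₁, rfl⟩ := h₁
  obtain ⟨m₂, z₂, Γ₂, hΓ₂, hrow₂, hcost₂, rfl⟩ := h₂
  refine ⟨m₁ + m₂, Fin.append z₁ z₂,
    fun i => Fin.append (fun j => θ * Γ₁ i j) (fun j => (1 - θ) * Γ₂ i j), ?_, ?_, ?_, ?_⟩
  · intro i j
    refine Fin.addCases (fun j₀ => ?_) (fun j₀ => ?_) j
    · simpa [Fin.append_left] using mul_nonneg hθ0 (hΓ₁ i j₀)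
    · simpa [Fin.append_right] using mul_nonneg (by linarith : (0:ℝ) ≤ 1 - θ) (hΓ₂ i j₀)
  · intro i
    rw [Fin.sum_univ_add]
    simp only [Fin.append_left, Fin.append_right, ← Finset.mul_sum, hrow₁ i, hrow₂ i]
    ring
  · calc ∑ i, ∑ j : Fin (m₁ + m₂),
          (Fin.append (fun j => θ * Γ₁ i j) (fun j => (1 - θ) * Γ₂ i j)) j
            * ‖z i - Fin.append z₁ z₂ j‖ ^ 2
        = θ * (∑ i, ∑ j, Γ₁ i j * ‖z i - z₁ j‖ ^ 2)
          + (1 - θ) * (∑ i, ∑ j, Γ₂ i j * ‖z i - z₂ j‖ ^ 2) := by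
          simp only [Fin.sum_univ_add, Fin.append_left, Fin.append_right,
            Finset.sum_add_distrib, Finset.mul_sum, mul_assoc]
      _ ≤ θ * a + (1 - θ) * b := by
          have h1θ : 0 ≤ 1 - θ := by linarith
          gcongr
  · simp only [Fin.sum_univ_add, Fin.append_left, Fin.append_right,
      Finset.sum_add_distrib, Finset.mul_sum, mul_assoc]

lemma weak_duality (hn : 0 < n) (hbdd : ∀ w, |ℓ w| ≤ M) {lam : ℝ} (hlam : 0 ≤ lam)
    {t val : ℝ} (hval : val ∈ pset z ℓ t) :
    val ≤ lam * t + (1 / (n : ℝ)) * ∑ i, phi ℓ lam (z i) := by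
  obtain ⟨m, z', Γ, hΓ, hrow, hcost, rfl⟩ := hval
  have key : ∀ i j, Γ i j * ℓ (z' j)
      ≤ Γ i j * phi ℓ lam (z i) + lam * (Γ i j * ‖z i - z' j‖ ^ 2) := by
    intro i j
    have h := mul_le_mul_of_nonneg_left (le_phi hbdd hlam (z i) (z' j)) (hΓ i j)
    nlinarith [h]
  calc ∑ i, ∑ j, Γ i j * ℓ (z' j)
      ≤ ∑ i, ∑ j, (Γ i j * phi ℓ lam (z i) + lam * (Γ i j * ‖z i - z' j‖ ^ 2)) :=
        Finset.sum_le_sum fun i _ => Finset.sum_le_sum fun j _ => key i j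
    _ = (∑ i, (∑ j, Γ i j) * phi ℓ lam (z i))
        + lam * (∑ i, ∑ j, Γ i j * ‖z i - z' j‖ ^ 2) := by
        simp only [Finset.sum_add_distrib, Finset.sum_mul, Finset.mul_sum]
    _ ≤ (∑ i, (1 / (n : ℝ)) * phi ℓ lam (z i)) + lam * t := by
        have h1 : (∑ i, (∑ j, Γ i j) * phi ℓ lam (z i))
            = ∑ i, (1 / (n : ℝ)) * phi ℓ lam (z i) :=
          Finset.sum_congr rfl fun i _ => by rw [hrow i]
        rw [h1]
        have h2 := mul_le_mul_of_nonneg_left hcost hlam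
        linarith
    _ = lam * t + (1 / (n : ℝ)) * ∑ i, phi ℓ lam (z i) := by
        rw [← Finset.mul_sum]; ring

end

end WDRO
theorem wasserstein_dro_strong_duality (d : ℕ) (hd : 1 ≤ d) (n : ℕ) (hn : 1 ≤ n)
    (z : Fin n → EuclideanSpace ℝ (Fin d))
    (ℓ : EuclideanSpace ℝ (Fin d) → ℝ) (hcont : Continuous ℓ)
    (M : ℝ) (hbdd : ∀ w, |ℓ w| ≤ M) (ε : ℝ) (hε : 0 < ε) :
    sSup {val : ℝ | ∃ (m : ℕ) (z' : Fin m → EuclideanSpace ℝ (Fin d))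
        (Γ : Fin n → Fin m → ℝ),
        (∀ i j, 0 ≤ Γ i j) ∧ (∀ i, ∑ j, Γ i j = 1 / (n : ℝ)) ∧
        (∑ i, ∑ j, Γ i j * ‖z i - z' j‖ ^ 2 ≤ ε) ∧
        val = ∑ i, ∑ j, Γ i j * ℓ (z' j)}
      = sInf {c : ℝ | ∃ lam : ℝ, 0 ≤ lam ∧
          c = lam * ε + (1 / (n : ℝ))
            * ∑ i, ⨆ w : EuclideanSpace ℝ (Fin d), (ℓ w - lam * ‖z i - w‖ ^ 2)} := by
  classical
  have hn0 : 0 < n := hn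
  have hnR : (0:ℝ) < n := by exact_mod_cast hn0
  have hsetP : {val : ℝ | ∃ (m : ℕ) (z' : Fin m → EuclideanSpace ℝ (Fin d))
        (Γ : Fin n → Fin m → ℝ),
        (∀ i j, 0 ≤ Γ i j) ∧ (∀ i, ∑ j, Γ i j = 1 / (n : ℝ)) ∧
        (∑ i, ∑ j, Γ i j * ‖z i - z' j‖ ^ 2 ≤ ε) ∧
        val = ∑ i, ∑ j, Γ i j * ℓ (z' j)} = WDRO.pset z ℓ ε := rfl
  have hsetD : {c : ℝ | ∃ lam : ℝ, 0 ≤ lam ∧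
          c = lam * ε + (1 / (n : ℝ))
            * ∑ i, ⨆ w : EuclideanSpace ℝ (Fin d), (ℓ w - lam * ‖z i - w‖ ^ 2)}
      = {c : ℝ | ∃ lam : ℝ, 0 ≤ lam ∧
          c = lam * ε + (1 / (n : ℝ)) * ∑ i, WDRO.phi ℓ lam (z i)} := rfl
  rw [hsetP, hsetD]
  set D : Set ℝ := {c : ℝ | ∃ lam : ℝ, 0 ≤ lam ∧
      c = lam * ε + (1 / (n : ℝ)) * ∑ i, WDRO.phi ℓ lam (z i)} with hDdef
  set P : ℝ → ℝ := fun t => sSup (WDRO.pset z ℓ t) with hPdef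
  -- concavity of P
  have hconc : ∀ a b θ : ℝ, 0 ≤ a → 0 ≤ b → 0 ≤ θ → θ ≤ 1 →
      θ * P a + (1 - θ) * P b ≤ P (θ * a + (1 - θ) * b) := by
    intro a b θ ha hb hθ0 hθ1
    refine le_of_forall_pos_le_add fun δ hδ => ?_
    obtain ⟨v₁, hv₁, hv₁'⟩ := exists_lt_of_lt_csSup (WDRO.pset_nonempty hn0 ha)
      (show P a - δ/2 < P a by linarith)
    obtain ⟨v₂, hv₂, hv₂'⟩ := exists_lt_of_lt_csSup (WDRO.pset_nonempty hn0 hb)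
      (show P b - δ/2 < P b by linarith)
    have hle : θ * v₁ + (1 - θ) * v₂ ≤ P (θ * a + (1 - θ) * b) :=
      le_csSup (WDRO.bddAbove_pset hn0 hbdd) (WDRO.comb_mem hθ0 hθ1 hv₁ hv₂)
    nlinarith [mul_le_mul_of_nonneg_left hv₁'.le hθ0,
      mul_le_mul_of_nonneg_left hv₂'.le (by linarith : (0:ℝ) ≤ 1 - θ)]
  -- monotonicity of P
  have hmono : ∀ t₁ t₂ : ℝ, 0 ≤ t₁ → t₁ ≤ t₂ → P t₁ ≤ P t₂ := by
    intro t₁ t₂ h0 h12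
    refine csSup_le_csSup (WDRO.bddAbove_pset hn0 hbdd) (WDRO.pset_nonempty hn0 h0) ?_
    rintro v ⟨m, z', Γ, h1, h2, h3, h4⟩
    exact ⟨m, z', Γ, h1, h2, le_trans h3 h12, h4⟩
  -- slope inequality from concavity
  have hslope : ∀ a u : ℝ, 0 ≤ a → a < ε → ε < u →
      (P u - P ε) / (u - ε) ≤ (P ε - P a) / (ε - a) := by
    intro a u ha hae heu
    have hua : 0 < u - a := by linarith
    set θ := (u - ε) / (u - a) with hθdef
    have hθ0 : 0 ≤ θ := div_nonneg (by linarith) (by linarith)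
    have hθ1 : θ ≤ 1 := by rw [hθdef, div_le_one hua]; linarith
    have hcomb : θ * a + (1 - θ) * u = ε := by
      have hθm : θ * (u - a) = u - ε := by rw [hθdef]; exact div_mul_cancel₀ _ hua.ne'
      linear_combination -hθm
    have hc := hconc a u θ ha (by linarith) hθ0 hθ1
    rw [hcomb] at hc
    have h3 : θ * P a + (1 - θ) * P u = ((u - ε) * P a + (ε - a) * P u) / (u - a) := by
      rw [hθdef]; field_simp; ring
    rw [h3, div_le_iff₀ hua] at hc
    rw [div_le_div_iff₀ (by linarith) (by linarith)]
    nlinarith [hc]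
  -- the supergradient
  set S : Set ℝ := {s | ∃ t, ε < t ∧ s = (P t - P ε) / (t - ε)} with hSdef
  have hSne : S.Nonempty := ⟨(P (ε + 1) - P ε) / (ε + 1 - ε), ε + 1, by linarith, rfl⟩
  have hSbdd : BddAbove S := by
    refine ⟨(P ε - P (ε/2)) / (ε - ε/2), ?_⟩
    rintro s ⟨t, ht, rfl⟩
    exact hslope (ε/2) t (by linarith) (by linarith) ht
  set lam : ℝ := sSup S with hlamdef
  have hlam0 : 0 ≤ lam := by
    have h1 : P ε ≤ P (ε + 1) := hmono ε (ε + 1) hε.le (by linarith)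
    have h2 : (0:ℝ) ≤ (P (ε + 1) - P ε) / (ε + 1 - ε) := by
      apply div_nonneg <;> linarith
    exact le_trans h2 (le_csSup hSbdd ⟨ε + 1, by linarith, rfl⟩)
  have hsg : ∀ t, 0 ≤ t → P t ≤ P ε + lam * (t - ε) := by
    intro t ht
    rcases lt_trichotomy t ε with h | h | h
    · have hub : lam ≤ (P ε - P t) / (ε - t) := by
        refine csSup_le hSne ?_
        rintro s ⟨u, hu, rfl⟩
        exact hslope t u ht h hu
      have h2 := mul_le_mul_of_nonneg_right hub (by linarith : (0:ℝ) ≤ ε - t)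
      rw [div_mul_cancel₀ _ (by linarith : ε - t ≠ 0)] at h2
      nlinarith [h2]
    · simp [h]
    · have h2 := mul_le_mul_of_nonneg_right
        (le_csSup hSbdd (⟨t, h, rfl⟩ : (P t - P ε) / (t - ε) ∈ S))
        (by linarith : (0:ℝ) ≤ t - ε)
      rw [div_mul_cancel₀ _ (by linarith : t - ε ≠ 0)] at h2
      linarith
  -- key inequality: dual value at lam is at most P ε
  have hkey : lam * ε + (1 / (n : ℝ)) * ∑ i, WDRO.phi ℓ lam (z i) ≤ P ε := by
    refine le_of_forall_pos_le_add fun δ hδ => ?_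
    have hex : ∀ i : Fin n, ∃ w : EuclideanSpace ℝ (Fin d),
        WDRO.phi ℓ lam (z i) - δ < ℓ w - lam * ‖z i - w‖ ^ 2 := by
      intro i
      exact exists_lt_of_lt_ciSup (show WDRO.phi ℓ lam (z i) - δ
        < WDRO.phi ℓ lam (z i) by linarith)
    choose w hw using hex
    set t₀ : ℝ := (1 / (n : ℝ)) * ∑ i, ‖z i - w i‖ ^ 2 with ht₀def
    have ht₀0 : 0 ≤ t₀ := by rw [ht₀def]; positivity
    have h1 : (1 / (n : ℝ)) * ∑ i, ℓ (w i) ≤ P t₀ :=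
      le_csSup (WDRO.bddAbove_pset hn0 hbdd) (WDRO.diag_mem hn0 w le_rfl)
    have h2 : P t₀ ≤ P ε + lam * (t₀ - ε) := hsg t₀ ht₀0
    have hsum : (∑ i, WDRO.phi ℓ lam (z i)) - n * δ
        ≤ (∑ i, ℓ (w i)) - lam * ∑ i, ‖z i - w i‖ ^ 2 := by
      have h3 := Finset.sum_le_sum fun i (_ : i ∈ Finset.univ) => (hw i).le
      rw [Finset.sum_sub_distrib, Finset.sum_sub_distrib, Finset.sum_const,
        Finset.card_univ, Fintype.card_fin, nsmul_eq_mul, ← Finset.mul_sum] at h3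
      exact h3
    have hsum' := mul_le_mul_of_nonneg_left hsum (by positivity : (0:ℝ) ≤ 1 / (n:ℝ))
    have e1 : (1 / (n : ℝ)) * ((∑ i, WDRO.phi ℓ lam (z i)) - n * δ)
        = (1 / (n : ℝ)) * (∑ i, WDRO.phi ℓ lam (z i)) - δ := by
      field_simp
    have e2 : (1 / (n : ℝ)) * ((∑ i, ℓ (w i)) - lam * ∑ i, ‖z i - w i‖ ^ 2)
        = (1 / (n : ℝ)) * (∑ i, ℓ (w i)) - lam * t₀ := by
      rw [ht₀def]; ring
    rw [e1, e2] at hsum'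
    nlinarith [hsum', h1, h2]
  -- finish
  have hDne : D.Nonempty :=
    ⟨0 * ε + (1 / (n : ℝ)) * ∑ i, WDRO.phi ℓ 0 (z i), 0, le_rfl, rfl⟩
  have hDbdd : BddBelow D := by
    refine ⟨-M, ?_⟩
    rintro c ⟨l, hl, rfl⟩
    have h1 : ∀ i : Fin n, -M ≤ WDRO.phi ℓ l (z i) := fun i =>
      le_trans (abs_le.1 (hbdd (z i))).1 (WDRO.self_le_phi hbdd hl (z i))
    have h2 : (n : ℝ) * (-M) ≤ ∑ i, WDRO.phi ℓ l (z i) := by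
      simpa using Finset.sum_le_sum fun i (_ : i ∈ Finset.univ) => h1 i
    have h3 := mul_le_mul_of_nonneg_left h2 (by positivity : (0:ℝ) ≤ 1 / (n:ℝ))
    have h4 : (1 / (n:ℝ)) * ((n:ℝ) * (-M)) = -M := by field_simp
    have h5 : 0 ≤ l * ε := mul_nonneg hl hε.le
    linarith
  apply le_antisymm
  · refine csSup_le (WDRO.pset_nonempty hn0 hε.le) fun v hv => le_csInf hDne ?_
    rintro c ⟨l, hl, rfl⟩
    exact WDRO.weak_duality hn0 hbdd hl hv
  · calc sInf D ≤ lam * ε + (1 / (n : ℝ)) * ∑ i, WDRO.phi ℓ lam (z i) :=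
        csInf_le hDbdd ⟨lam, hlam0, rfl⟩
      _ ≤ P ε := hkey
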